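/- Let N ≥ 2 and let ξ ∈ ℂᴺ be a row vector. Set r = Σ_{j=1}^N |ξ_j|² and ρ = |Σ_{j=1}^N ξ_j²| (so 0 ≤ ρ ≤ r). Then there exist θ ∈ ℝ and a real orthogonal matrix A ∈ O(N,ℝ) such that e^{iθ} ξ A = ( √((r+ρ)/2), i·√((r−ρ)/2), 0, …, 0 ). -/

import Mathlib

open Matrix

/-- normal form of a complex row vector under the action
`ξ ↦ e^{iθ} ξ A`, `A ∈ O(N,ℝ)`: every `ξ ∈ ℂᴺ` can be brought to the form
`(√((r+ρ)/2), i√((r−ρ)/2), 0, …, 0)` where `r = ξξ*` and `ρ = |ξξ'|`. -/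
theorem rowVector_normal_form (N : ℕ) (hN : 2 ≤ N) (ξ : Fin N → ℂ)
    (r ρ : ℝ)
    (hr : r = ∑ j, ‖ξ j‖ ^ 2)
    (hρ : ρ = ‖∑ j, ξ j ^ 2‖) :
    ∃ θ : ℝ, ∃ A ∈ Matrix.orthogonalGroup (Fin N) ℝ,
      (fun j => Complex.exp (θ * Complex.I) *
          Matrix.vecMul ξ (A.map (Complex.ofReal)) j) =
      (fun j : Fin N =>
        if (j : ℕ) = 0 then (Real.sqrt ((r + ρ) / 2) : ℂ)
        else if (j : ℕ) = 1 then Complex.I * (Real.sqrt ((r - ρ) / 2) : ℂ)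
        else 0) := by
  classical
  set σ : ℂ := ∑ j, ξ j ^ 2 with hσ
  set θ : ℝ := -(Complex.arg σ) / 2 with hθ
  set η : Fin N → ℂ := fun j => Complex.exp (θ * Complex.I) * ξ j with hηdef
  have hη2 : ∑ j, η j ^ 2 = (ρ : ℂ) := by
    have h1 : ∑ j, η j ^ 2 = Complex.exp (θ * Complex.I) ^ 2 * σ := by
      rw [hσ, Finset.mul_sum]
      simp [hηdef, mul_pow]
    rw [h1, hρ]
    calc Complex.exp (θ * Complex.I) ^ 2 * σ
        = Complex.exp (θ * Complex.I) ^ 2 * (((‖σ‖ : ℝ) : ℂ) *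
            Complex.exp (Complex.arg σ * Complex.I)) := by
          rw [Complex.norm_mul_exp_arg_mul_I σ]
      _ = ((‖σ‖ : ℝ) : ℂ) * (Complex.exp (θ * Complex.I) *
            (Complex.exp (θ * Complex.I) * Complex.exp (Complex.arg σ * Complex.I))) := by
          ring
      _ = ((‖σ‖ : ℝ) : ℂ) * Complex.exp
            (θ * Complex.I + (θ * Complex.I + Complex.arg σ * Complex.I)) := by
          rw [Complex.exp_add, Complex.exp_add]
      _ = ((‖σ‖ : ℝ) : ℂ) * Complex.exp 0 := by
          congr 1
          rw [hθ]
          push_cast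
          ring
      _ = ((‖σ‖ : ℝ) : ℂ) := by simp
  set u : Fin N → ℝ := fun j => (η j).re with hudef
  set v : Fin N → ℝ := fun j => (η j).im with hvdef
  have hre : ∑ j, (u j ^ 2 - v j ^ 2) = ρ := by
    have h := congrArg Complex.re hη2
    simpa [Complex.re_sum, pow_two, Complex.mul_re, hudef, hvdef] using h
  have him : ∑ j, u j * v j = 0 := by
    have h := congrArg Complex.im hη2
    simp [Complex.im_sum, pow_two, Complex.mul_im, hudef, hvdef] at h
    have h2 : ∑ j, (u j * v j + v j * u j) = 0 := by
      simpa using h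
    have h3 : ∑ j, (u j * v j + v j * u j) = 2 * ∑ j, u j * v j := by
      rw [Finset.mul_sum]; apply Finset.sum_congr rfl; intro i _; ring
    rw [h3] at h2; linarith
  have hrsum : ∑ j, (u j ^ 2 + v j ^ 2) = r := by
    rw [hr]
    apply Finset.sum_congr rfl
    intro j _
    have habs : ‖η j‖ = ‖ξ j‖ := by
      simp [hηdef, Complex.norm_exp_ofReal_mul_I]
    rw [← habs, Complex.sq_norm, Complex.normSq_apply, hudef, hvdef]
    ring
  have hSu : ∑ j, u j ^ 2 = (r + ρ) / 2 := by
    rw [Finset.sum_add_distrib] at hrsum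
    rw [Finset.sum_sub_distrib] at hre
    linarith
  have hSv : ∑ j, v j ^ 2 = (r - ρ) / 2 := by
    rw [Finset.sum_add_distrib] at hrsum
    rw [Finset.sum_sub_distrib] at hre
    linarith
  set a : ℝ := Real.sqrt ((r + ρ) / 2) with hadef
  set b : ℝ := Real.sqrt ((r - ρ) / 2) with hbdef
  have ha : a * a = ∑ j, u j ^ 2 := by
    rw [hSu, hadef]
    apply Real.mul_self_sqrt
    rw [← hSu]; positivity
  have hb : b * b = ∑ j, v j ^ 2 := by
    rw [hSv, hbdef]
    apply Real.mul_self_sqrt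
    rw [← hSv]; positivity
  -- Euclidean space setup
  let eu : EuclideanSpace ℝ (Fin N) := (WithLp.equiv 2 (Fin N → ℝ)).symm u
  let ev : EuclideanSpace ℝ (Fin N) := (WithLp.equiv 2 (Fin N → ℝ)).symm v
  have heu_apply : ∀ i, eu i = u i := fun i => rfl
  have hev_apply : ∀ i, ev i = v i := fun i => rfl
  have inner_eu_eu : (inner ℝ eu eu : ℝ) = a * a := by
    rw [ha, PiLp.inner_apply]
    simp [ RCLike.inner_apply, starRingEnd_apply, heu_apply, pow_two]
  have inner_ev_ev : (inner ℝ ev ev : ℝ) = b * b := by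
    rw [hb, PiLp.inner_apply]
    simp [ RCLike.inner_apply, starRingEnd_apply, hev_apply, pow_two]
  have inner_eu_ev : (inner ℝ eu ev : ℝ) = 0 := by
    rw [← him]
    simp [PiLp.inner_apply, RCLike.inner_apply, starRingEnd_apply, heu_apply, hev_apply, mul_comm]
  have a_ne : u ≠ 0 → a ≠ 0 := by
    intro hu0 ha0
    apply hu0
    rw [ha0, zero_mul] at ha
    funext i
    have h := (Finset.sum_eq_zero_iff_of_nonneg (fun j _ => sq_nonneg (u j))).mp ha.symm i
      (Finset.mem_univ i)
    simpa using pow_eq_zero_iff (n := 2) (by norm_num) |>.mp h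
  have b_ne : v ≠ 0 → b ≠ 0 := by
    intro hv0 hb0
    apply hv0
    rw [hb0, zero_mul] at hb
    funext i
    have h := (Finset.sum_eq_zero_iff_of_nonneg (fun j _ => sq_nonneg (v j))).mp hb.symm i
      (Finset.mem_univ i)
    simpa using pow_eq_zero_iff (n := 2) (by norm_num) |>.mp h
  let i0 : Fin N := ⟨0, by omega⟩
  let i1 : Fin N := ⟨1, by omega⟩
  have hi01 : i0 ≠ i1 := by simp [i0, i1, Fin.ext_iff]
  let w : Fin N → EuclideanSpace ℝ (Fin N) := fun i => if i = i0 then a⁻¹ • eu else if i = i1 then b⁻¹ • ev else 0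
  let s : Set (Fin N) := {i | (i = i0 ∧ u ≠ 0) ∨ (i = i1 ∧ v ≠ 0)}
  have hw0 : w i0 = a⁻¹ • eu := by simp [w]
  have hw1 : w i1 = b⁻¹ • ev := by simp [w, hi01.symm, hi01]
  have horth : Orthonormal ℝ (s.restrict w) := by
    rw [orthonormal_iff_ite]
    rintro ⟨x, hx⟩ ⟨y, hy⟩
    have hrx : s.restrict w ⟨x, hx⟩ = w x := rfl
    have hry : s.restrict w ⟨y, hy⟩ = w y := rfl
    rw [hrx, hry]
    rcases hx with ⟨rfl, hu0⟩ | ⟨rfl, hv0⟩ <;> rcases hy with ⟨rfl, hu0'⟩ | ⟨rfl, hv0'⟩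
    · rw [hw0, if_pos rfl]
      rw [real_inner_smul_left, real_inner_smul_right, inner_eu_eu]
      have := a_ne hu0
      field_simp
    · rw [hw0, hw1, if_neg (by simp [Subtype.ext_iff]; exact hi01)]
      rw [real_inner_smul_left, real_inner_smul_right, inner_eu_ev]
      ring
    · rw [hw0, hw1, if_neg (by simp [Subtype.ext_iff]; exact hi01.symm)]
      rw [real_inner_smul_left, real_inner_smul_right, real_inner_comm, inner_eu_ev]
      ring
    · rw [hw1, if_pos rfl]
      rw [real_inner_smul_left, real_inner_smul_right, inner_ev_ev]
      have := b_ne hv0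
      field_simp
  have hcard : Module.finrank ℝ (EuclideanSpace ℝ (Fin N)) = Fintype.card (Fin N) := by
    simp [finrank_euclideanSpace]
  obtain ⟨B, hB⟩ := horth.exists_orthonormalBasis_extension_of_card_eq hcard
  let A : Matrix (Fin N) (Fin N) ℝ := Matrix.of fun i j => B j i
  have hBo := orthonormal_iff_ite.mp B.orthonormal
  have hA : A ∈ Matrix.orthogonalGroup (Fin N) ℝ := by
    rw [Matrix.mem_orthogonalGroup_iff']
    ext j k
    have h := hBo j k
    rw [PiLp.inner_apply] at h
    simp only [RCLike.inner_apply, starRingEnd_apply, star_trivial] at h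
    simpa [Matrix.mul_apply, Matrix.star_apply, Matrix.one_apply, A, mul_comm] using h
  have hinner : ∀ (z : EuclideanSpace ℝ (Fin N)) (j : Fin N), (inner ℝ z (B j) : ℝ) = ∑ i, z i * B j i := by
    intro z j
    rw [PiLp.inner_apply]
    simp [RCLike.inner_apply, starRingEnd_apply, mul_comm]
  have hu' : ∀ j, ∑ i, u i * A i j = if j = i0 then a else 0 := by
    intro j
    by_cases hu0 : u = 0
    · have ha0 : a = 0 := by
        have : a * a = 0 := by rw [ha]; simp [hu0]
        exact mul_self_eq_zero.mp this
      simp [hu0, ha0]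
    · have hB0 : B i0 = a⁻¹ • eu := by rw [hB i0 (Or.inl ⟨rfl, hu0⟩), hw0]
      have hane := a_ne hu0
      have heu : eu = a • B i0 := by
        rw [hB0, smul_smul, mul_inv_cancel₀ hane, one_smul]
      have : ∑ i, u i * A i j = (inner ℝ eu (B j) : ℝ) := by
        rw [hinner]
        apply Finset.sum_congr rfl
        intro i _
        rw [heu_apply]
        rfl
      rw [this, heu, real_inner_smul_left, hBo i0 j]
      by_cases hj : j = i0
      · simp [hj]
      · rw [if_neg (fun h : i0 = j => hj h.symm), if_neg hj, mul_zero]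
  have hv' : ∀ j, ∑ i, v i * A i j = if j = i1 then b else 0 := by
    intro j
    by_cases hv0 : v = 0
    · have hb0 : b = 0 := by
        have : b * b = 0 := by rw [hb]; simp [hv0]
        exact mul_self_eq_zero.mp this
      simp [hv0, hb0]
    · have hB1 : B i1 = b⁻¹ • ev := by rw [hB i1 (Or.inr ⟨rfl, hv0⟩), hw1]
      have hbne := b_ne hv0
      have hev : ev = b • B i1 := by
        rw [hB1, smul_smul, mul_inv_cancel₀ hbne, one_smul]
      have : ∑ i, v i * A i j = (inner ℝ ev (B j) : ℝ) := by
        rw [hinner]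
        apply Finset.sum_congr rfl
        intro i _
        rw [hev_apply]
        rfl
      rw [this, hev, real_inner_smul_left, hBo i1 j]
      by_cases hj : j = i1
      · simp [hj]
      · rw [if_neg (fun h : i1 = j => hj h.symm), if_neg hj, mul_zero]
  refine ⟨θ, A, hA, ?_⟩
  funext j
  have hveq : Matrix.vecMul ξ (A.map Complex.ofReal) j = ∑ i, ξ i * (A i j : ℂ) := by
    simp [Matrix.vecMul, dotProduct, Matrix.map_apply, mul_comm]
  simp only [hveq, Finset.mul_sum]
  have hterm : ∀ i ∈ Finset.univ, Complex.exp (θ * Complex.I) * (ξ i * (A i j : ℂ))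
      = ((u i * A i j : ℝ) : ℂ) + ((v i * A i j : ℝ) : ℂ) * Complex.I := by
    intro i _
    have hηi : η i = (u i : ℂ) + (v i : ℂ) * Complex.I := (Complex.re_add_im (η i)).symm
    rw [← mul_assoc]
    have : Complex.exp (θ * Complex.I) * ξ i = η i := rfl
    rw [this, hηi]
    push_cast
    ring
  rw [Finset.sum_congr rfl hterm, Finset.sum_add_distrib, ← Finset.sum_mul,
    ← Complex.ofReal_sum, ← Complex.ofReal_sum, hu' j, hv' j]
  by_cases hj0 : j = i0
  · have : (j : ℕ) = 0 := by rw [hj0]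
    simp [this, hj0, hi01, fun h => hi01 (hj0 ▸ h : i0 = i1), i0]
  · by_cases hj1 : j = i1
    · have h1 : (j : ℕ) = 1 := by rw [hj1]
      have h0 : ¬ (j : ℕ) = 0 := by rw [hj1]; simp
      have hne : i1 ≠ i0 := Ne.symm hi01
      simp [h1, h0, hj0, hj1, hne, i1]
      ring
    · have h0 : ¬ (j : ℕ) = 0 := fun h => hj0 (Fin.ext (by simpa using h))
      have h1 : ¬ (j : ℕ) = 1 := fun h => hj1 (Fin.ext (by simpa using h))
      simp [h0, h1, hj0, hj1]
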